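/- (Hilbert–Schmidt Lipschitz estimate for the noise coefficient) Let σ : ℝ → ℝ be Lipschitz with Lipschitz constant L_σ. Let k_Q ∈ L²(ℝ²) be a kernel with M := sup_{x ∈ ℝ} ∫_ℝ k_Q(x,y)² dy < ∞, and let √Q denote the integral operator (√Q h)(x) = ∫_ℝ k_Q(x,y) h(y) dy on L²(ℝ). Fix a measurable function ṽ : ℝ → ℝ. Then for all u₁, u₂ ∈ L²(ℝ) and every Hilbert basis (e_n)_{n≥1} of L²(ℝ): ∑_{n=1}^∞ ∫_ℝ ( (σ(u₁(x) + ṽ(x)) - σ(u₂(x) + ṽ(x)))·(√Q e_n)(x) )² dx ≤ L_σ²·M·‖u₁ - u₂‖_{L²}². -/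

import Mathlib

open Real MeasureTheory

/-- Hilbert–Schmidt Lipschitz estimate for the noise coefficient:
for `σ` Lipschitz with constant `L_σ`, a square-integrable kernel `k_Q` with
`M = sup_x ∫ k_Q(x,y)² dy < ∞`, any measurable `ṽ`, `u₁, u₂ ∈ L²(ℝ)` and any
Hilbert basis `(eₙ)` of `L²(ℝ)`:
`∑ₙ ∫ ((σ(u₁+ṽ) - σ(u₂+ṽ))·(√Q eₙ))² dx ≤ L_σ²·M·‖u₁-u₂‖²`. -/
theorem hilbert_schmidt_lipschitz
    (σ : ℝ → ℝ) (Lσ : ℝ) (hLσ : 0 ≤ Lσ) (hσ : LipschitzWith Lσ.toNNReal σ)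
    (kQ : ℝ → ℝ → ℝ)
    (hkQ : MemLp (fun p : ℝ × ℝ => kQ p.1 p.2) 2 (volume : Measure (ℝ × ℝ)))
    (M : ℝ) (hM : ∀ x : ℝ, (∫ y : ℝ, (kQ x y) ^ 2) ≤ M)
    (vshift : ℝ → ℝ) (hvshift : Measurable vshift)
    (u₁ u₂ : ℝ → ℝ)
    (hu₁ : MemLp u₁ 2 (volume : Measure ℝ))
    (hu₂ : MemLp u₂ 2 (volume : Measure ℝ))
    (e : HilbertBasis ℕ ℝ (Lp ℝ 2 (volume : Measure ℝ))) :
    ∑' n : ℕ, ∫ x : ℝ,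
      ((σ (u₁ x + vshift x) - σ (u₂ x + vshift x))
          * ∫ y : ℝ, kQ x y * (e n : Lp ℝ 2 (volume : Measure ℝ)) y) ^ 2
    ≤ Lσ ^ 2 * M * ∫ x : ℝ, (u₁ x - u₂ x) ^ 2 := by
  set f : ℝ → ℝ := fun x => σ (u₁ x + vshift x) - σ (u₂ x + vshift x) with hf_def
  set g : ℕ → ℝ → ℝ := fun n x => ∫ y : ℝ, kQ x y * (e n : Lp ℝ 2 (volume : Measure ℝ)) y
    with hg_def
  -- basic nonnegativity facts
  have hMnn : 0 ≤ M := le_trans (integral_nonneg fun y => sq_nonneg _) (hM 0)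
  have hu12 : MemLp (fun x => u₁ x - u₂ x) 2 (volume : Measure ℝ) := hu₁.sub hu₂
  have hu12sq : Integrable (fun x => (u₁ x - u₂ x) ^ 2) volume := hu12.integrable_sq
  have hRHSnn : 0 ≤ Lσ ^ 2 * M * ∫ x : ℝ, (u₁ x - u₂ x) ^ 2 :=
    mul_nonneg (mul_nonneg (sq_nonneg _) hMnn) (integral_nonneg fun x => sq_nonneg _)
  -- pointwise Lipschitz bound on f
  have hfb : ∀ x, |f x| ≤ Lσ * |u₁ x - u₂ x| := by
    intro x
    have := hσ.dist_le_mul (u₁ x + vshift x) (u₂ x + vshift x)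
    simpa [Real.dist_eq, hf_def, Real.coe_toNNReal _ hLσ, add_sub_add_right_eq_sub] using this
  -- measurability of f
  have hfm : AEStronglyMeasurable f volume := by
    have h1 : AEStronglyMeasurable (fun x => σ (u₁ x + vshift x)) volume :=
      hσ.continuous.comp_aestronglyMeasurable
        (hu₁.aestronglyMeasurable.add hvshift.aestronglyMeasurable)
    have h2 : AEStronglyMeasurable (fun x => σ (u₂ x + vshift x)) volume :=
      hσ.continuous.comp_aestronglyMeasurable
        (hu₂.aestronglyMeasurable.add hvshift.aestronglyMeasurable)
    exact h1.sub h2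
  have hf2 : MemLp f 2 (volume : Measure ℝ) := by
    refine MemLp.of_le_mul (c := Lσ) hu12 hfm ?_
    filter_upwards with x
    simpa [Real.norm_eq_abs] using hfb x
  have hf2sq : Integrable (fun x => f x ^ 2) volume := hf2.integrable_sq
  have hfsq_le : ∀ x, f x ^ 2 ≤ Lσ ^ 2 * (u₁ x - u₂ x) ^ 2 := by
    intro x
    have h := hfb x
    calc f x ^ 2 = |f x| ^ 2 := (sq_abs _).symm
      _ ≤ (Lσ * |u₁ x - u₂ x|) ^ 2 := pow_le_pow_left₀ (abs_nonneg _) h 2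
      _ = Lσ ^ 2 * (u₁ x - u₂ x) ^ 2 := by rw [mul_pow, sq_abs]
  -- a.e. sections of kQ are in L²
  have hksq : Integrable (fun p : ℝ × ℝ => kQ p.1 p.2 ^ 2)
      ((volume : Measure ℝ).prod (volume : Measure ℝ)) := by
    exact hkQ.integrable_sq
  have hkaesm : ∀ᵐ x : ℝ, AEStronglyMeasurable (fun y => kQ x y) volume := by
    exact (hkQ.aestronglyMeasurable :
      AEStronglyMeasurable (fun p : ℝ × ℝ => kQ p.1 p.2)
        ((volume : Measure ℝ).prod (volume : Measure ℝ))).prodMk_left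
  have hkae : ∀ᵐ x : ℝ, MemLp (fun y => kQ x y) 2 (volume : Measure ℝ) := by
    filter_upwards [hksq.prod_right_ae, hkaesm] with x hx hxm
    exact (memLp_two_iff_integrable_sq hxm).mpr hx
  -- key Bessel bound, a.e. in x
  have key : ∀ᵐ x : ℝ, ∀ s : Finset ℕ, ∑ n ∈ s, (g n x) ^ 2 ≤ M := by
    filter_upwards [hkae] with x hx
    intro s
    set Kx : Lp ℝ 2 (volume : Measure ℝ) := hx.toLp (fun y => kQ x y) with hKx
    have hcoe : (Kx : ℝ → ℝ) =ᵐ[volume] fun y => kQ x y := hx.coeFn_toLp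
    have hinner : ∀ n : ℕ, g n x = @inner ℝ _ _ Kx (e n : Lp ℝ 2 (volume : Measure ℝ)) := by
      intro n
      rw [L2.inner_def]
      refine (integral_congr_ae ?_).symm
      filter_upwards [hcoe] with y hy
      simp [hy, RCLike.inner_apply, mul_comm]
    have hnorm : ‖Kx‖ ^ 2 ≤ M := by
      have h1 : @inner ℝ _ _ Kx Kx = ∫ y : ℝ, kQ x y ^ 2 := by
        rw [L2.inner_def]
        refine integral_congr_ae ?_
        filter_upwards [hcoe] with y hy
        simp [hy, RCLike.inner_apply, sq]
      have := real_inner_self_eq_norm_sq Kx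
      rw [h1] at this
      rw [← this]; exact hM x
    have hBessel := (e.orthonormal).sum_inner_products_le (s := s) Kx
    refine le_trans ?_ (le_trans hBessel hnorm)
    refine le_of_eq (Finset.sum_congr rfl fun n _ => ?_)
    rw [hinner n, real_inner_comm]
    simp [Real.norm_eq_abs, sq_abs]
  -- measurability of g n
  have hgm : ∀ n : ℕ, AEStronglyMeasurable (g n) volume := by
    intro n
    have h1 : AEStronglyMeasurable
        (fun p : ℝ × ℝ => kQ p.1 p.2 * (e n : Lp ℝ 2 (volume : Measure ℝ)) p.2)
        ((volume : Measure ℝ).prod (volume : Measure ℝ)) := by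
      exact (hkQ.aestronglyMeasurable :
        AEStronglyMeasurable (fun p : ℝ × ℝ => kQ p.1 p.2)
          ((volume : Measure ℝ).prod (volume : Measure ℝ))).mul ((Lp.aestronglyMeasurable (e n : Lp ℝ 2 (volume : Measure ℝ))).comp_quasiMeasurePreserving
        Measure.quasiMeasurePreserving_snd)
    exact h1.integral_prod_right'
  -- integrability of each summand
  have hFint : ∀ n : ℕ, Integrable (fun x => (f x * g n x) ^ 2) volume := by
    intro n
    have hb : ∀ᵐ x : ℝ, ‖(f x * g n x) ^ 2‖ ≤ M * f x ^ 2 := by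
      filter_upwards [key] with x hx
      have h1 : (g n x) ^ 2 ≤ M := by simpa using hx {n}
      have : (f x * g n x) ^ 2 = f x ^ 2 * (g n x) ^ 2 := by ring
      rw [Real.norm_eq_abs, abs_of_nonneg (sq_nonneg _), this]
      calc f x ^ 2 * g n x ^ 2 ≤ f x ^ 2 * M :=
            mul_le_mul_of_nonneg_left h1 (sq_nonneg _)
        _ = M * f x ^ 2 := mul_comm _ _
    exact Integrable.mono' (hf2sq.const_mul M) ((hfm.mul (hgm n)).pow 2) hb
  -- main finite-sum estimate
  refine tsum_le_of_sum_le' hRHSnn ?_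
  intro s
  rw [← integral_finset_sum s fun n _ => hFint n]
  have step1 : (∫ x : ℝ, ∑ n ∈ s, (f x * g n x) ^ 2) ≤ ∫ x : ℝ, M * f x ^ 2 := by
    refine integral_mono_ae (integrable_finset_sum s fun n _ => hFint n)
      (hf2sq.const_mul M) ?_
    filter_upwards [key] with x hx
    have : ∑ n ∈ s, (f x * g n x) ^ 2 = f x ^ 2 * ∑ n ∈ s, (g n x) ^ 2 := by
      rw [Finset.mul_sum]; exact Finset.sum_congr rfl fun n _ => by ring
    rw [this]
    calc f x ^ 2 * ∑ n ∈ s, (g n x) ^ 2 ≤ f x ^ 2 * M :=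
          mul_le_mul_of_nonneg_left (hx s) (sq_nonneg _)
      _ = M * f x ^ 2 := mul_comm _ _
  refine step1.trans ?_
  rw [integral_const_mul]
  have step2 : (∫ x : ℝ, f x ^ 2) ≤ Lσ ^ 2 * ∫ x : ℝ, (u₁ x - u₂ x) ^ 2 := by
    rw [← integral_const_mul]
    exact integral_mono hf2sq (hu12sq.const_mul _) fun x => hfsq_le x
  calc M * ∫ x : ℝ, f x ^ 2 ≤ M * (Lσ ^ 2 * ∫ x : ℝ, (u₁ x - u₂ x) ^ 2) :=
        mul_le_mul_of_nonneg_left step2 hMnn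
    _ = Lσ ^ 2 * M * ∫ x : ℝ, (u₁ x - u₂ x) ^ 2 := by ring
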